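/- Let μ be a generalized T-permutant measure on X^Y. Then the operator F_μ : ℝ^X → ℝ^Y defined by F_μ(φ) = Σ_{h ∈ X^Y} (φ ∘ h) · μ(h) is linear and T-equivariant, i.e., F_μ(φ ∘ g) = F_μ(φ) ∘ T(g) for every φ ∈ ℝ^X and g ∈ G. -/

import Mathlib

/-- If `μ` is a generalized `T`-permutant measure on `X^Y`, then
`F_μ(φ) = Σ_h (φ ∘ h) μ(h)` is linear and `T`-equivariant. -/
theorem stmt_1 {X Y : Type*} [Fintype X] [Fintype Y] [DecidableEq X] [DecidableEq Y]
    (G : Subgroup (Equiv.Perm X)) (K : Subgroup (Equiv.Perm Y)) (T : G →* K)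
    (μ : (Y → X) → ℝ)
    (hμ : ∀ (g : G) (h : Y → X),
      μ h = μ (⇑(g : Equiv.Perm X) ∘ h ∘ ⇑((T g⁻¹ : K) : Equiv.Perm Y)))
    (F : (X → ℝ) → (Y → ℝ))
    (hF : ∀ φ : X → ℝ, F φ = fun y => ∑ h : Y → X, φ (h y) * μ h) :
    (∀ (a b : ℝ) (φ ψ : X → ℝ), F (a • φ + b • ψ) = a • F φ + b • F ψ) ∧
    (∀ (g : G) (φ : X → ℝ),
      F (φ ∘ ⇑(g : Equiv.Perm X)) = F φ ∘ ⇑((T g : K) : Equiv.Perm Y)) := by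
  constructor
  · intro a b φ ψ
    funext y
    simp only [hF, Pi.add_apply, Pi.smul_apply, smul_eq_mul]
    rw [Finset.mul_sum, Finset.mul_sum, ← Finset.sum_add_distrib]
    congr 1; funext h; ring
  · intro g φ
    funext y
    simp only [hF, Function.comp_apply]
    set e : (Y → X) ≃ (Y → X) :=
      { toFun := fun h => ⇑(g : Equiv.Perm X) ∘ h ∘ ⇑((T g⁻¹ : K) : Equiv.Perm Y)
        invFun := fun h => ⇑((g⁻¹ : G) : Equiv.Perm X) ∘ h ∘ ⇑((T g : K) : Equiv.Perm Y)
        left_inv := by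
          intro h; funext z
          simp [← Equiv.Perm.mul_apply, ← Subgroup.coe_mul, ← map_mul, -Equiv.Perm.coe_mul, -MulMemClass.coe_mul, Equiv.Perm.mul_def]
        right_inv := by
          intro h; funext z
          simp [← Equiv.Perm.mul_apply, ← Subgroup.coe_mul, ← map_mul, -Equiv.Perm.coe_mul, -MulMemClass.coe_mul, Equiv.Perm.mul_def] } with he
    refine Fintype.sum_equiv e _ _ ?_
    intro h
    simp only [he, Equiv.coe_fn_mk, Function.comp_apply]
    rw [← hμ g h]
    congr 2
    have : ((T g⁻¹ : K) : Equiv.Perm Y) (((T g : K) : Equiv.Perm Y) y) = y := by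
      simp [← Equiv.Perm.mul_apply, ← Subgroup.coe_mul, ← map_mul]
    rw [this]
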